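/- The ℤ-linear map from the monoid algebra ℤ[FreeMonoid ℤ] into the product ∏_{s ≥ 1} ℤ[FreeMonoid (ℤ/sℤ)], whose s-th component is induced on basis elements by the monoid homomorphism FreeMonoid ℤ → FreeMonoid (ℤ/sℤ) reducing each letter modulo s, is injective. (This is the underlying content of the statement that the natural ring map R_∞ → lim_s R_s between the fusion rings of the quantum reflection groups H_N^{s+} is an embedding, since R_s has ℤ-basis indexed by the free monoid on ℤ/sℤ and the restriction maps send basis element x_f to x_{f mod s}.) -/

import Mathlib

noncomputable section

/-- The ℤ-linear map `ℤ[FreeMonoid ℤ] → ℤ[FreeMonoid (ℤ/sℤ)]` induced on basis elements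
by the monoid homomorphism reducing each letter modulo `s`. -/
def reduceMod (s : {s : ℕ // 1 ≤ s}) :
    MonoidAlgebra ℤ (FreeMonoid ℤ) →ₗ[ℤ] MonoidAlgebra ℤ (FreeMonoid (ZMod (s : ℕ))) :=
  MonoidAlgebra.mapDomainLinearMap ℤ ℤ (FreeMonoid.map (fun n : ℤ => (n : ZMod (s : ℕ))))

lemma list_map_injOn {α β : Type*} (f : α → β) (S : Set α) (hf : Set.InjOn f S) :
    ∀ l₁ l₂ : List α, (∀ a ∈ l₁, a ∈ S) → (∀ a ∈ l₂, a ∈ S) →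
      l₁.map f = l₂.map f → l₁ = l₂ := by
  intro l₁
  induction l₁ with
  | nil => intro l₂ _ _ h; cases l₂ <;> simp_all
  | cons a t ih =>
    intro l₂ h₁ h₂ h
    cases l₂ with
    | nil => simp_all
    | cons b t₂ =>
      simp only [List.map_cons, List.cons.injEq] at h
      have hab : a = b := hf (h₁ a (by simp)) (h₂ b (by simp)) h.1
      have : t = t₂ := ih t₂ (fun x hx => h₁ x (by simp [hx]))
        (fun x hx => h₂ x (by simp [hx])) h.2
      simp [hab, this]

/-- Lemma 2.4 of the paper: the natural map `R_∞ → lim_s R_s` between the fusion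
rings of the quantum reflection groups `H_N^{s+}` is an embedding; concretely, the
ℤ-linear map from `ℤ[FreeMonoid ℤ]` into `∏_{s ≥ 1} ℤ[FreeMonoid (ℤ/sℤ)]` whose s-th
component reduces letters modulo `s` is injective. -/
theorem reduceMod_pi_injective :
    Function.Injective
      (LinearMap.pi reduceMod :
        MonoidAlgebra ℤ (FreeMonoid ℤ) →ₗ[ℤ]
          ∀ s : {s : ℕ // 1 ≤ s}, MonoidAlgebra ℤ (FreeMonoid (ZMod (s : ℕ)))) := by
  rw [injective_iff_map_eq_zero]
  intro x hx
  classical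
  -- the finite set of letters occurring in the support of `x`
  set letters : Finset ℤ :=
    x.coeff.support.biUnion (fun w => (FreeMonoid.toList w).toFinset) with hletters
  set M : ℕ := letters.sup Int.natAbs with hM
  set s : ℕ := 2 * M + 1 with hs
  have hs1 : 1 ≤ s := by omega
  -- the s-th component of hx
  have hxs : Finsupp.mapDomain (FreeMonoid.map (fun n : ℤ => (n : ZMod s))) x.coeff = 0 := by
    have := congr_fun hx ⟨s, hs1⟩
    exact congr_arg MonoidAlgebra.coeff this
  -- reduction mod s is injective on integers of absolute value ≤ M
  have hinj : Set.InjOn (fun n : ℤ => (n : ZMod s)) {a : ℤ | a.natAbs ≤ M} := by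
    intro a ha b hb hab
    simp only [Set.mem_setOf_eq] at ha hb
    rw [ZMod.intCast_eq_intCast_iff] at hab
    have hdvd : (s : ℤ) ∣ b - a := Int.ModEq.dvd hab
    have habs : |b - a| < (s : ℤ) := by
      rw [abs_sub_lt_iff]
      constructor <;> omega
    have := Int.eq_zero_of_abs_lt_dvd hdvd habs
    omega
  -- hence the induced map on words with small letters is injective
  set S : Set (FreeMonoid ℤ) := {w | ∀ a ∈ FreeMonoid.toList w, a.natAbs ≤ M} with hS
  have hinjW : Set.InjOn (FreeMonoid.map (fun n : ℤ => (n : ZMod s))) S := by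
    intro w₁ h₁ w₂ h₂ h
    have : (FreeMonoid.toList w₁).map (fun n : ℤ => (n : ZMod s)) =
        (FreeMonoid.toList w₂).map (fun n : ℤ => (n : ZMod s)) := h
    exact list_map_injOn _ _ hinj _ _ h₁ h₂ this
  have hsupp : ↑x.coeff.support ⊆ S := by
    intro w hw
    intro a haw
    have : a ∈ letters := Finset.mem_biUnion.mpr ⟨w, hw, List.mem_toFinset.mpr haw⟩
    exact Finset.le_sup (f := Int.natAbs) this
  have h0 : (↑(0 : MonoidAlgebra ℤ (FreeMonoid ℤ)).coeff.support : Set (FreeMonoid ℤ)) ⊆ S := by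
    simp
  have := Finsupp.mapDomain_injOn S hinjW hsupp h0
    (by rw [hxs, MonoidAlgebra.coeff_zero, Finsupp.mapDomain_zero])
  exact MonoidAlgebra.coeff_injective this
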